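/- The series S := Σ_i λ_i t_i² converges almost surely, the infinite product Π_i (1 − 2cλ_i)^{−1/2} converges to a finite positive value, and E[exp(c S)] = Π_i (1 − 2cλ_i)^{−1/2} < ∞. -/

import Mathlib

open MeasureTheory ProbabilityTheory Real
open scoped ENNReal NNReal

section Helpers

lemma gauss_aux {a : ℝ} (ha : 2 * a < 1) :
    Integrable (fun x : ℝ => Real.exp (a * x ^ 2)) (gaussianReal 0 1) ∧
    ∫ x, Real.exp (a * x ^ 2) ∂(gaussianReal 0 1) = (1 - 2 * a) ^ (-(1/2) : ℝ) := by
  have h1 : gaussianReal 0 1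
      = volume.withDensity (fun x => ((gaussianPDFReal 0 1 x).toNNReal : ℝ≥0∞)) :=
    gaussianReal_of_var_ne_zero 0 one_ne_zero
  have hmeas : Measurable (fun x => (gaussianPDFReal 0 1 x).toNNReal) :=
    (measurable_gaussianPDFReal 0 1).real_toNNReal
  have hb : (0:ℝ) < (1 - 2*a)/2 := by linarith
  have h12a : (0:ℝ) < 1 - 2*a := by linarith
  have hkey : ∀ x : ℝ, gaussianPDFReal 0 1 x * Real.exp (a * x ^ 2)
      = (Real.sqrt (2*π))⁻¹ * Real.exp (-((1 - 2*a)/2) * x ^ 2) := by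
    intro x
    simp only [gaussianPDFReal, NNReal.coe_one, mul_one, sub_zero]
    rw [mul_assoc, ← Real.exp_add]
    ring_nf
  have hsmul : ∀ x : ℝ, (gaussianPDFReal 0 1 x).toNNReal • Real.exp (a * x ^ 2)
      = (Real.sqrt (2*π))⁻¹ * Real.exp (-((1 - 2*a)/2) * x ^ 2) := by
    intro x
    rw [NNReal.smul_def, smul_eq_mul, Real.coe_toNNReal _ (gaussianPDFReal_nonneg 0 1 x), hkey]
  have hint : Integrable (fun x : ℝ => (Real.sqrt (2*π))⁻¹
      * Real.exp (-((1 - 2*a)/2) * x ^ 2)) volume :=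
    (integrable_exp_neg_mul_sq hb).const_mul _
  constructor
  · rw [h1, integrable_withDensity_iff_integrable_smul hmeas]
    exact hint.congr (ae_of_all _ fun x => (hsmul x).symm)
  · rw [h1, integral_withDensity_eq_integral_smul hmeas]
    rw [integral_congr_ae (ae_of_all _ hsmul), integral_const_mul, integral_gaussian]
    have h2pi : (0:ℝ) < 2 * π := by positivity
    rw [show π / ((1 - 2*a)/2) = 2*π / (1-2*a) by field_simp]
    rw [Real.sqrt_div h2pi.le, Real.rpow_neg h12a.le, ← Real.sqrt_eq_rpow]
    rw [div_eq_mul_inv, ← mul_assoc, inv_mul_cancel₀ (Real.sqrt_pos.2 h2pi).ne', one_mul]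

lemma gauss_sq_int : Integrable (fun x : ℝ => x ^ 2) (gaussianReal 0 1) := by
  have h1 : gaussianReal 0 1
      = volume.withDensity (fun x => ((gaussianPDFReal 0 1 x).toNNReal : ℝ≥0∞)) :=
    gaussianReal_of_var_ne_zero 0 one_ne_zero
  have hmeas : Measurable (fun x => (gaussianPDFReal 0 1 x).toNNReal) :=
    (measurable_gaussianPDFReal 0 1).real_toNNReal
  rw [h1, integrable_withDensity_iff_integrable_smul hmeas]
  have hint : Integrable (fun x : ℝ => (Real.sqrt (2*π))⁻¹
      * (x ^ 2 * Real.exp (-(1/2 : ℝ) * x ^ 2))) volume := by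
    refine Integrable.const_mul ?_ _
    have := integrable_rpow_mul_exp_neg_mul_sq (b := (1/2:ℝ)) (by norm_num)
      (s := ((2:ℕ):ℝ)) (by norm_num)
    simp only [Real.rpow_natCast] at this
    exact this
  refine hint.congr (ae_of_all _ fun x => ?_)
  show _ = (gaussianPDFReal 0 1 x).toNNReal • x ^ 2
  rw [NNReal.smul_def, smul_eq_mul, Real.coe_toNNReal _ (gaussianPDFReal_nonneg 0 1 x)]
  simp only [gaussianPDFReal, NNReal.coe_one, mul_one, sub_zero]
  ring_nf

variable {Ω : Type*} [MeasurableSpace Ω] {P : Measure Ω} [IsProbabilityMeasure P]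

lemma per_term {t : ℕ → Ω → ℝ} (htmeas : ∀ i, Measurable (t i))
    (htlaw : ∀ i, P.map (t i) = gaussianReal 0 1) {a : ℝ} (ha : 2 * a < 1) (i : ℕ) :
    Integrable (fun ω => Real.exp (a * t i ω ^ 2)) P ∧
    ∫ ω, Real.exp (a * t i ω ^ 2) ∂P = (1 - 2 * a) ^ (-(1/2) : ℝ) := by
  obtain ⟨hint, hval⟩ := gauss_aux ha
  rw [← htlaw i] at hint hval
  have hsm : AEStronglyMeasurable (fun x : ℝ => Real.exp (a * x ^ 2)) (P.map (t i)) :=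
    (Real.continuous_exp.comp (continuous_const.mul (continuous_pow 2))).aestronglyMeasurable
  constructor
  · exact (integrable_map_measure hsm (htmeas i).aemeasurable).mp hint
  · rw [← hval, integral_map (htmeas i).aemeasurable hsm]

lemma mgf_helper {t : ℕ → Ω → ℝ} (htmeas : ∀ i, Measurable (t i))
    (htlaw : ∀ i, P.map (t i) = gaussianReal 0 1)
    (htindep : iIndepFun t P)
    {w : ℕ → ℝ} (hw : ∀ i, 2 * w i < 1) (n : ℕ) :
    Integrable (fun ω => Real.exp (∑ i ∈ Finset.range n, w i * t i ω ^ 2)) P ∧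
    ∫ ω, Real.exp (∑ i ∈ Finset.range n, w i * t i ω ^ 2) ∂P
      = ∏ i ∈ Finset.range n, (1 - 2 * w i) ^ (-(1/2) : ℝ) := by
  set X : ℕ → Ω → ℝ := fun i ω => w i * t i ω ^ 2 with hX
  have hXm : ∀ i, Measurable (X i) := fun i => ((htmeas i).pow_const 2).const_mul _
  have hXindep : iIndepFun X P :=
    htindep.comp (fun i x => w i * x ^ 2) fun i => (measurable_id.pow_const 2).const_mul _
  have h_int : ∀ i ∈ Finset.range n, Integrable (fun ω => Real.exp (1 * X i ω)) P := by
    intro i _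
    simpa [hX] using (per_term htmeas htlaw (hw i) i).1
  have hsum_apply : ∀ ω, (∑ i ∈ Finset.range n, X i) ω
      = ∑ i ∈ Finset.range n, w i * t i ω ^ 2 := by
    intro ω; simp [hX]
  constructor
  · have := hXindep.integrable_exp_mul_sum hXm h_int
    refine this.congr (ae_of_all _ fun ω => ?_)
    simp [hsum_apply]
  · have hmgf := hXindep.mgf_sum hXm (t := 1) (Finset.range n)
    have hL : mgf (∑ i ∈ Finset.range n, X i) P 1
        = ∫ ω, Real.exp (∑ i ∈ Finset.range n, w i * t i ω ^ 2) ∂P := by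
      unfold mgf
      exact integral_congr_ae (ae_of_all _ fun ω => by simp [hsum_apply])
    rw [hL] at hmgf
    rw [hmgf]
    refine Finset.prod_congr rfl fun i _ => ?_
    have := (per_term htmeas htlaw (hw i) i).2
    unfold mgf
    rw [← this]
    exact integral_congr_ae (ae_of_all _ fun ω => by simp [hX])

lemma log_sum {a : ℕ → ℝ} (ha : Summable fun i => |a i|) {ε : ℝ} (hε : 0 < ε)
    (h : ∀ i, ε ≤ 1 - a i) : Summable fun i => -(1/2) * Real.log (1 - a i) := by
  refine Summable.mul_left _ (Summable.of_abs ?_)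
  set δ := min ε 1 with hδdef
  have hδ0 : 0 < δ := lt_min hε one_pos
  have hδ1 : δ ≤ 1 := min_le_right _ _
  refine Summable.of_nonneg_of_le (fun i => abs_nonneg _) (fun i => ?_) (ha.mul_left δ⁻¹)
  have hδx : δ ≤ 1 - a i := le_trans (min_le_left _ _) (h i)
  have hx0 : 0 < 1 - a i := lt_of_lt_of_le hδ0 hδx
  have hδinv : 1 ≤ δ⁻¹ := by
    rw [le_inv_comm₀ one_pos hδ0]; simpa using hδ1
  rcases le_or_gt 1 (1 - a i) with h1 | h1
  · rw [abs_of_nonneg (Real.log_nonneg h1)]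
    have hlog : Real.log (1 - a i) ≤ (1 - a i) - 1 := Real.log_le_sub_one_of_pos hx0
    have : (1 - a i) - 1 ≤ |a i| := by
      have := neg_le_abs (a i); linarith
    nlinarith [abs_nonneg (a i)]
  · rw [abs_of_nonpos (Real.log_nonpos (by linarith) h1.le)]
    have hlog : Real.log (1 - a i)⁻¹ ≤ (1 - a i)⁻¹ - 1 :=
      Real.log_le_sub_one_of_pos (by positivity)
    rw [Real.log_inv] at hlog
    have e1 : (1 - a i)⁻¹ - 1 = a i / (1 - a i) := by field_simp; ring
    have key : a i / (1 - a i) ≤ δ⁻¹ * |a i| := by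
      rw [← div_eq_inv_mul]
      calc a i / (1 - a i) ≤ |a i| / (1 - a i) := by gcongr; exact le_abs_self _
        _ ≤ |a i| / δ := by gcongr
    linarith [hlog, key, e1 ▸ hlog]

end Helpers

/-- Let `(t i)` be i.i.d. standard real Gaussian random variables, `(λ i)` absolutely
summable reals, and `c` real with `sup_i 2cλ_i < 1`. Then `S = Σ_i λ_i t_i²` converges
almost surely, the infinite product `Π_i (1 − 2cλ_i)^(−1/2)` converges to a finite positive
value, and `E[exp(c S)] = Π_i (1 − 2cλ_i)^(−1/2) < ∞`. -/
theorem stmt_6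
    {Ω : Type*} [MeasurableSpace Ω] (P : Measure Ω) [IsProbabilityMeasure P]
    (t : ℕ → Ω → ℝ) (htmeas : ∀ i, Measurable (t i))
    (htlaw : ∀ i, P.map (t i) = gaussianReal 0 1)
    (htindep : iIndepFun t P)
    (lam : ℕ → ℝ) (hlam : Summable fun i => |lam i|)
    (c : ℝ) (hc : (⨆ i, 2 * c * lam i) < 1) :
    (∀ᵐ ω ∂P, Summable fun i => lam i * t i ω ^ 2) ∧
    Multipliable (fun i => (1 - 2 * c * lam i) ^ (-(1 / 2) : ℝ)) ∧
    0 < ∏' i, (1 - 2 * c * lam i) ^ (-(1 / 2) : ℝ) ∧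
    Integrable (fun ω => Real.exp (c * ∑' i, lam i * t i ω ^ 2)) P ∧
    ∫ ω, Real.exp (c * ∑' i, lam i * t i ω ^ 2) ∂P
      = ∏' i, (1 - 2 * c * lam i) ^ (-(1 / 2) : ℝ) := by
  -- basic facts about the weights
  have hsum2c : Summable fun i => |2 * c * lam i| :=
    (hlam.mul_left |2 * c|).congr fun i => by rw [← abs_mul, mul_assoc]
  have hbdd : BddAbove (Set.range fun i => 2 * c * lam i) :=
    hsum2c.of_abs.tendsto_atTop_zero.bddAbove_range
  have h2c : ∀ i, 2 * c * lam i < 1 := fun i => lt_of_le_of_lt (le_ciSup hbdd i) hc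
  have hpos : ∀ i, 0 < 1 - 2 * c * lam i := fun i => by linarith [h2c i]
  set ε : ℝ := 1 - ⨆ i, 2 * c * lam i with hεdef
  have hε : 0 < ε := by simp only [hεdef]; linarith
  have hεle : ∀ i, ε ≤ 1 - 2 * c * lam i := fun i => by
    have := le_ciSup hbdd i; simp only [hεdef]; linarith
  -- the positive weights μ
  set μ : ℕ → ℝ := fun i => max (c * lam i) 0 with hμdef
  have hμ0 : ∀ i, 0 ≤ μ i := fun i => le_max_right _ _
  have hμle : ∀ i, μ i ≤ |c| * |lam i| := fun i => by
    rw [← abs_mul]; exact max_le (le_abs_self _) (abs_nonneg _)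
  have hμlt : ∀ i, 2 * μ i < 1 := by
    intro i
    rcases max_cases (c * lam i) 0 with ⟨he, _⟩ | ⟨he, _⟩
    · simp only [hμdef]; rw [he]; rw [← mul_assoc] at *; linarith [h2c i]
    · simp only [hμdef]; rw [he]; norm_num
  have hεμ : ∀ i, min ε 1 ≤ 1 - 2 * μ i := by
    intro i
    rcases max_cases (c * lam i) 0 with ⟨he, _⟩ | ⟨he, _⟩
    · simp only [hμdef]; rw [he]
      refine le_trans (min_le_left _ _) ?_
      have := hεle i; rw [← mul_assoc]; linarith
    · simp only [hμdef]; rw [he]; simpa using min_le_right ε 1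
  have hμabs : Summable fun i => |μ i| :=
    Summable.of_nonneg_of_le (fun i => abs_nonneg _)
      (fun i => by rw [abs_of_nonneg (hμ0 i)]; exact hμle i) (hlam.mul_left |c|)
  have hsum2μ : Summable fun i => |2 * μ i| :=
    (hμabs.mul_left 2).congr fun i => by
      rw [abs_mul, abs_of_nonneg (by norm_num : (0:ℝ) ≤ 2)]
  -- summability of the logs
  have hlogc : Summable fun i => -(1/2) * Real.log (1 - 2 * c * lam i) :=
    log_sum (a := fun i => 2 * c * lam i) hsum2c hε hεle
  have hlogμ : Summable fun i => -(1/2) * Real.log (1 - 2 * μ i) :=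
    log_sum (a := fun i => 2 * μ i) hsum2μ (lt_min hε one_pos) hεμ
  -- the infinite product
  have hexp : ∀ i, Real.exp (-(1/2) * Real.log (1 - 2 * c * lam i))
      = (1 - 2 * c * lam i) ^ (-(1/2) : ℝ) := fun i => by
    rw [Real.rpow_def_of_pos (hpos i), mul_comm]
  have hprod : HasProd (fun i => (1 - 2 * c * lam i) ^ (-(1/2) : ℝ))
      (Real.exp (∑' i, -(1/2) * Real.log (1 - 2 * c * lam i))) := by
    have heq : (Real.exp ∘ fun i => -(1/2) * Real.log (1 - 2 * c * lam i))
        = fun i => (1 - 2 * c * lam i) ^ (-(1/2) : ℝ) := funext hexp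
    exact heq ▸ hlogc.hasSum.rexp
  have hmult : Multipliable (fun i => (1 - 2 * c * lam i) ^ (-(1/2) : ℝ)) :=
    hprod.multipliable
  have htprod : ∏' i, (1 - 2 * c * lam i) ^ (-(1/2) : ℝ)
      = Real.exp (∑' i, -(1/2) * Real.log (1 - 2 * c * lam i)) := hprod.tprod_eq
  have htprodpos : 0 < ∏' i, (1 - 2 * c * lam i) ^ (-(1/2) : ℝ) := by
    rw [htprod]; exact Real.exp_pos _
  -- a.s. summability
  have hsq_int : Integrable (fun x : ℝ => x ^ 2) (P.map (t 0)) := by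
    rw [htlaw 0]; exact gauss_sq_int
  have hK : ∀ i, ∫⁻ ω, ENNReal.ofReal (t i ω ^ 2) ∂P
      = ∫⁻ x, ENNReal.ofReal (x ^ 2) ∂(gaussianReal 0 1) := fun i => by
    rw [← htlaw i, lintegral_map ((continuous_pow 2).measurable.ennreal_ofReal) (htmeas i)]
  have hKlt : ∫⁻ x, ENNReal.ofReal (x ^ 2) ∂(gaussianReal 0 1) < ⊤ :=
    gauss_sq_int.lintegral_lt_top
  have hmeas_i : ∀ i, Measurable fun ω => ENNReal.ofReal (|lam i| * t i ω ^ 2) :=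
    fun i => (((htmeas i).pow_const 2).const_mul _).ennreal_ofReal
  have hAE : ∀ᵐ ω ∂P, Summable fun i => |lam i| * t i ω ^ 2 := by
    have h1 : ∫⁻ ω, ∑' i, ENNReal.ofReal (|lam i| * t i ω ^ 2) ∂P
        = ∑' i, ∫⁻ ω, ENNReal.ofReal (|lam i| * t i ω ^ 2) ∂P :=
      lintegral_tsum fun i => (hmeas_i i).aemeasurable
    have h2 : ∀ i, ∫⁻ ω, ENNReal.ofReal (|lam i| * t i ω ^ 2) ∂P
        = ENNReal.ofReal |lam i| * ∫⁻ x, ENNReal.ofReal (x ^ 2) ∂(gaussianReal 0 1) := by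
      intro i
      rw [← hK i, ← lintegral_const_mul _ ((htmeas i).pow_const 2).ennreal_ofReal]
      exact lintegral_congr fun ω => ENNReal.ofReal_mul (abs_nonneg _)
    have h3 : (∑' i, ENNReal.ofReal |lam i|) ≠ ⊤ := by
      have hsnn : Summable fun i => (|lam i|).toNNReal := hlam.toNNReal
      exact ENNReal.tsum_coe_ne_top_iff_summable.2 hsnn
    have h4 : ∫⁻ ω, ∑' i, ENNReal.ofReal (|lam i| * t i ω ^ 2) ∂P < ⊤ := by
      rw [h1]
      calc (∑' i, ∫⁻ ω, ENNReal.ofReal (|lam i| * t i ω ^ 2) ∂P)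
          = (∑' i, ENNReal.ofReal |lam i|)
            * ∫⁻ x, ENNReal.ofReal (x ^ 2) ∂(gaussianReal 0 1) := by
            rw [← ENNReal.tsum_mul_right]; exact tsum_congr h2
        _ < ⊤ := ENNReal.mul_lt_top h3.lt_top hKlt
    have h5 : ∀ᵐ ω ∂P, (∑' i, ENNReal.ofReal (|lam i| * t i ω ^ 2)) < ⊤ :=
      ae_lt_top (Measurable.ennreal_tsum hmeas_i) h4.ne
    filter_upwards [h5] with ω hω
    have := ENNReal.summable_toReal hω.ne
    refine this.congr fun i => ?_
    rw [ENNReal.toReal_ofReal (mul_nonneg (abs_nonneg _) (sq_nonneg _))]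
  have hsum1 : ∀ᵐ ω ∂P, Summable fun i => lam i * t i ω ^ 2 := by
    filter_upwards [hAE] with ω hω
    refine Summable.of_abs (hω.congr fun i => ?_)
    rw [abs_mul, abs_pow, sq_abs]
  have hsumμ : ∀ᵐ ω ∂P, Summable fun i => μ i * t i ω ^ 2 := by
    filter_upwards [hAE] with ω hω
    refine Summable.of_nonneg_of_le (fun i => mul_nonneg (hμ0 i) (sq_nonneg _))
      (fun i => ?_) (hω.mul_left |c|)
    calc μ i * t i ω ^ 2 ≤ (|c| * |lam i|) * t i ω ^ 2 :=
          mul_le_mul_of_nonneg_right (hμle i) (sq_nonneg _)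
      _ = |c| * (|lam i| * t i ω ^ 2) := by ring
  -- the dominating function g
  set g : Ω → ℝ := fun ω => Real.exp (∑' i, μ i * t i ω ^ 2) with hgdef
  set G : ℕ → Ω → ℝ := fun n ω => Real.exp (∑ i ∈ Finset.range n, μ i * t i ω ^ 2)
    with hGdef
  have hGmeas : ∀ n, Measurable (G n) := fun n =>
    (Finset.measurable_sum _ fun i _ => ((htmeas i).pow_const 2).const_mul _).exp
  have htend_g : ∀ᵐ ω ∂P, Filter.Tendsto (fun n => G n ω) Filter.atTop (nhds (g ω)) := by
    filter_upwards [hsumμ] with ω hω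
    exact Real.continuous_exp.continuousAt.tendsto.comp hω.hasSum.tendsto_sum_nat
  set B : ℝ := Real.exp (∑' i, -(1/2) * Real.log (1 - 2 * μ i)) with hBdef
  have hLμnn : ∀ i, 0 ≤ -(1/2) * Real.log (1 - 2 * μ i) := by
    intro i
    have hl : Real.log (1 - 2 * μ i) ≤ 0 :=
      Real.log_nonpos (by linarith [hμlt i]) (by linarith [hμ0 i])
    nlinarith
  have hGval : ∀ n, ∫ ω, G n ω ∂P = ∏ i ∈ Finset.range n, (1 - 2 * μ i) ^ (-(1/2) : ℝ) :=
    fun n => (mgf_helper htmeas htlaw htindep hμlt n).2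
  have hGint : ∀ n, Integrable (G n) P :=
    fun n => (mgf_helper htmeas htlaw htindep hμlt n).1
  have hGbound : ∀ n, ∫ ω, G n ω ∂P ≤ B := by
    intro n
    rw [hGval n]
    have : ∏ i ∈ Finset.range n, (1 - 2 * μ i) ^ (-(1/2) : ℝ)
        = Real.exp (∑ i ∈ Finset.range n, -(1/2) * Real.log (1 - 2 * μ i)) := by
      rw [Real.exp_sum]
      refine Finset.prod_congr rfl fun i _ => ?_
      rw [Real.rpow_def_of_pos (by linarith [hμlt i]), mul_comm]
    rw [this, hBdef]
    exact Real.exp_le_exp.2 (Summable.sum_le_tsum _ (fun i _ => hLμnn i) hlogμ)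
  have hg_meas : AEStronglyMeasurable g P :=
    aestronglyMeasurable_of_tendsto_ae Filter.atTop
      (fun n => (hGmeas n).aestronglyMeasurable) htend_g
  have hg_int : Integrable g P := by
    refine ⟨hg_meas, ?_⟩
    rw [hasFiniteIntegral_iff_ofReal (ae_of_all _ fun ω => (Real.exp_pos _).le)]
    have step1 : ∫⁻ ω, ENNReal.ofReal (g ω) ∂P
        = ∫⁻ ω, Filter.liminf (fun n => ENNReal.ofReal (G n ω)) Filter.atTop ∂P := by
      refine lintegral_congr_ae ?_
      filter_upwards [htend_g] with ω hω
      exact ((ENNReal.continuous_ofReal.continuousAt.tendsto.comp hω).liminf_eq).symm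
    have step2 : ∫⁻ ω, Filter.liminf (fun n => ENNReal.ofReal (G n ω)) Filter.atTop ∂P
        ≤ Filter.liminf (fun n => ∫⁻ ω, ENNReal.ofReal (G n ω) ∂P) Filter.atTop :=
      lintegral_liminf_le fun n => (hGmeas n).ennreal_ofReal
    have step3 : ∀ n, ∫⁻ ω, ENNReal.ofReal (G n ω) ∂P ≤ ENNReal.ofReal B := by
      intro n
      rw [← ofReal_integral_eq_lintegral_ofReal (hGint n)
        (ae_of_all _ fun ω => (Real.exp_pos _).le)]
      exact ENNReal.ofReal_le_ofReal (hGbound n)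
    have step4 : Filter.liminf (fun n => ∫⁻ ω, ENNReal.ofReal (G n ω) ∂P) Filter.atTop
        ≤ ENNReal.ofReal B := by
      refine le_trans (Filter.liminf_le_liminf (Filter.Eventually.of_forall step3)) ?_
      simp [Filter.liminf_const]
    calc ∫⁻ ω, ENNReal.ofReal (g ω) ∂P ≤ ENNReal.ofReal B := by
          rw [step1]; exact le_trans step2 step4
      _ < ⊤ := ENNReal.ofReal_lt_top
  -- the functions F n and DCT
  set F : ℕ → Ω → ℝ := fun n ω => Real.exp (c * ∑ i ∈ Finset.range n, lam i * t i ω ^ 2)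
    with hFdef
  have hFmeas : ∀ n, AEStronglyMeasurable (F n) P := fun n =>
    (((Finset.measurable_sum _ fun i _ =>
      ((htmeas i).pow_const 2).const_mul _).const_mul c).exp).aestronglyMeasurable
  have hFbound : ∀ n, ∀ᵐ ω ∂P, ‖F n ω‖ ≤ g ω := by
    intro n
    filter_upwards [hsumμ] with ω hω
    rw [Real.norm_eq_abs, abs_of_pos (Real.exp_pos _)]
    simp only [hFdef, hgdef]
    refine Real.exp_le_exp.2 ?_
    calc c * ∑ i ∈ Finset.range n, lam i * t i ω ^ 2
        = ∑ i ∈ Finset.range n, (c * lam i) * t i ω ^ 2 := by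
          rw [Finset.mul_sum]; exact Finset.sum_congr rfl fun i _ => by ring
      _ ≤ ∑ i ∈ Finset.range n, μ i * t i ω ^ 2 :=
          Finset.sum_le_sum fun i _ =>
            mul_le_mul_of_nonneg_right (le_max_left _ _) (sq_nonneg _)
      _ ≤ ∑' i, μ i * t i ω ^ 2 :=
          Summable.sum_le_tsum _ (fun i _ => mul_nonneg (hμ0 i) (sq_nonneg _)) hω
  have htendF : ∀ᵐ ω ∂P, Filter.Tendsto (fun n => F n ω) Filter.atTop
      (nhds (Real.exp (c * ∑' i, lam i * t i ω ^ 2))) := by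
    filter_upwards [hsum1] with ω hω
    exact (Real.continuous_exp.comp (continuous_const.mul continuous_id)).continuousAt.tendsto.comp
      hω.hasSum.tendsto_sum_nat
  have hDCT := tendsto_integral_of_dominated_convergence g hFmeas hg_int hFbound htendF
  have hFval : ∀ n, ∫ ω, F n ω ∂P
      = ∏ i ∈ Finset.range n, (1 - 2 * c * lam i) ^ (-(1/2) : ℝ) := by
    intro n
    have hw : ∀ i, 2 * (c * lam i) < 1 := fun i => by rw [← mul_assoc]; exact h2c i
    have hval2 := (mgf_helper htmeas htlaw htindep (w := fun i => c * lam i) hw n).2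
    have h1 : ∀ ω, F n ω = Real.exp (∑ i ∈ Finset.range n, (c * lam i) * t i ω ^ 2) := by
      intro ω
      simp only [hFdef]
      congr 1
      rw [Finset.mul_sum]
      exact Finset.sum_congr rfl fun i _ => by ring
    rw [integral_congr_ae (ae_of_all _ h1), hval2]
    exact Finset.prod_congr rfl fun i _ => by rw [← mul_assoc]
  have htendProd : Filter.Tendsto
      (fun n => ∏ i ∈ Finset.range n, (1 - 2 * c * lam i) ^ (-(1/2) : ℝ)) Filter.atTop
      (nhds (∏' i, (1 - 2 * c * lam i) ^ (-(1/2) : ℝ))) :=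
    hmult.hasProd.tendsto_prod_nat
  have hval : ∫ ω, Real.exp (c * ∑' i, lam i * t i ω ^ 2) ∂P
      = ∏' i, (1 - 2 * c * lam i) ^ (-(1/2) : ℝ) := by
    refine tendsto_nhds_unique ?_ htendProd
    have : (fun n => ∫ ω, F n ω ∂P)
        = fun n => ∏ i ∈ Finset.range n, (1 - 2 * c * lam i) ^ (-(1/2) : ℝ) :=
      funext hFval
    rw [← this]
    exact hDCT
  have hIcs : Integrable (fun ω => Real.exp (c * ∑' i, lam i * t i ω ^ 2)) P := by
    refine hg_int.mono (aestronglyMeasurable_of_tendsto_ae Filter.atTop hFmeas htendF) ?_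
    filter_upwards [hsum1, hsumμ] with ω hω1 hωμ
    rw [Real.norm_eq_abs, Real.norm_eq_abs, abs_of_pos (Real.exp_pos _),
      abs_of_pos (Real.exp_pos _)]
    refine Real.exp_le_exp.2 ?_
    calc c * ∑' i, lam i * t i ω ^ 2 = ∑' i, (c * lam i) * t i ω ^ 2 := by
          rw [← tsum_mul_left]; exact tsum_congr fun i => by ring
      _ ≤ ∑' i, μ i * t i ω ^ 2 := by
          refine Summable.tsum_le_tsum (fun i =>
            mul_le_mul_of_nonneg_right (le_max_left _ _) (sq_nonneg _)) ?_ hωμ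
          exact (hω1.mul_left c).congr fun i => by ring
  exact ⟨hsum1, hmult, htprodpos, hIcs, hval⟩
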